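/- Fix real constants g, k_{d1}, k_{d2}, k_{d3}, k_L, c, n, and let h(p) = (2/π)·arctan(n·p), s(p) = p·h(p), q(p) = p²·h(p). Define the smoothed hovering vector field Z : ℝ⁴ → ℝ⁴ on states (z, φ, w, p) by Z(z, φ, w, p) = ( w, p, g − k_{d1}·s(p)·w − k_L·p², −k_{d2}·q(p) − k_{d3}·w·p + c ), and let Y be the constant vector field Y(x) = (0, 0, 0, 1). Then for every (z, φ, w, p) ∈ ℝ⁴, the iterated Lie bracket equals [Y, [Y, Z]](z, φ, w, p) = ( 0, 0, −k_{d1}·w·s''(p) − 2·k_L, −k_{d2}·q''(p) ), where s'' and q'' denote second derivatives. -/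

import Mathlib

open Real

/-- Lie bracket of two vector fields on a normed space:
`[V, W](x) = DW(x)·V(x) − DV(x)·W(x)`. -/
noncomputable def lieBracketVF {E : Type*} [NormedAddCommGroup E] [NormedSpace ℝ E]
    (V W : E → E) (x : E) : E :=
  fderiv ℝ W x (V x) - fderiv ℝ V x (W x)

lemma fderiv_apply_e4 {G : ℝ × ℝ × ℝ × ℝ → ℝ × ℝ × ℝ × ℝ} {zz φ w p : ℝ}
    (hG : DifferentiableAt ℝ G (zz, φ, w, p)) :
    fderiv ℝ G (zz, φ, w, p) ((0:ℝ), (0:ℝ), (0:ℝ), (1:ℝ)) =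
      deriv (fun t => G (zz, φ, w, t)) p := by
  have hι : HasDerivAt (fun t : ℝ => ((zz, φ, w, t) : ℝ × ℝ × ℝ × ℝ))
      ((0:ℝ), (0:ℝ), (0:ℝ), (1:ℝ)) p :=
    (hasDerivAt_const p zz).prodMk ((hasDerivAt_const p φ).prodMk
      ((hasDerivAt_const p w).prodMk (hasDerivAt_id p)))
  exact (hG.hasFDerivAt.comp_hasDerivAt p hι).deriv.symm

theorem iterated_bracket_smoothed_hovering_field
    (g kd1 kd2 kd3 kL c n : ℝ)
    (h s q : ℝ → ℝ)
    (hh : ∀ p, h p = (2 / π) * arctan (n * p))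
    (hs : ∀ p, s p = p * h p)
    (hq : ∀ p, q p = p ^ 2 * h p)
    (Z Y : ℝ × ℝ × ℝ × ℝ → ℝ × ℝ × ℝ × ℝ)
    (hZ : ∀ zz φ w p : ℝ, Z (zz, φ, w, p) =
      (w, p, g - kd1 * s p * w - kL * p ^ 2, -kd2 * q p - kd3 * w * p + c))
    (hY : ∀ x, Y x = ((0:ℝ), (0:ℝ), (0:ℝ), (1:ℝ))) :
    ∀ zz φ w p : ℝ,
      lieBracketVF Y (lieBracketVF Y Z) (zz, φ, w, p) =
        ((0:ℝ), (0:ℝ), -kd1 * w * deriv (deriv s) p - 2 * kL,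
          -kd2 * deriv (deriv q) p) := by
  -- smoothness of s and q
  have hse : s = fun p => p * ((2 / π) * arctan (n * p)) := funext fun p => by rw [hs, hh]
  have hqe : q = fun p => p ^ 2 * ((2 / π) * arctan (n * p)) := funext fun p => by rw [hq, hh]
  have harc : ContDiff ℝ (⊤ : ℕ∞) (fun p : ℝ => (2 / π) * arctan (n * p)) :=
    contDiff_const.mul (Real.contDiff_arctan.comp (contDiff_const.mul contDiff_id))
  have hcs : ContDiff ℝ (⊤ : ℕ∞) s := hse ▸ contDiff_id.mul harc
  have hcq : ContDiff ℝ (⊤ : ℕ∞) q := hqe ▸ (contDiff_id.pow 2).mul harc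
  have hds : Differentiable ℝ s := hcs.differentiable (by simp)
  have hdq : Differentiable ℝ q := hcq.differentiable (by simp)
  have hcs' : ContDiff ℝ (⊤ : ℕ∞) (deriv s) := (contDiff_infty_iff_deriv.mp hcs).2
  have hcq' : ContDiff ℝ (⊤ : ℕ∞) (deriv q) := (contDiff_infty_iff_deriv.mp hcq).2
  have hds' : Differentiable ℝ (deriv s) := hcs'.differentiable (by simp)
  have hdq' : Differentiable ℝ (deriv q) := hcq'.differentiable (by simp)
  have hYe : Y = fun _ => ((0:ℝ), (0:ℝ), (0:ℝ), (1:ℝ)) := funext hY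
  have hZe : Z = fun x : ℝ × ℝ × ℝ × ℝ =>
      (x.2.2.1, x.2.2.2, g - kd1 * s x.2.2.2 * x.2.2.1 - kL * x.2.2.2 ^ 2,
        -kd2 * q x.2.2.2 - kd3 * x.2.2.1 * x.2.2.2 + c) := by
    funext x; obtain ⟨a, b, u, v⟩ := x; exact hZ a b u v
  have hdZ : Differentiable ℝ Z := by
    rw [hZe]; fun_prop
  -- first bracket
  have hW1 : lieBracketVF Y Z = fun x : ℝ × ℝ × ℝ × ℝ =>
      ((0:ℝ), (1:ℝ), -kd1 * x.2.2.1 * deriv s x.2.2.2 - 2 * kL * x.2.2.2,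
        -kd2 * deriv q x.2.2.2 - kd3 * x.2.2.1) := by
    funext x; obtain ⟨a, b, u, v⟩ := x
    have h3 : HasDerivAt (fun t => g - kd1 * s t * u - kL * t ^ 2)
        (-kd1 * u * deriv s v - 2 * kL * v) v := by
      have hr := ((hasDerivAt_const v g).sub
        (((hds v).hasDerivAt.const_mul kd1).mul_const u)).sub
        ((hasDerivAt_pow 2 v).const_mul kL)
      exact hr.congr_deriv (by push_cast; ring)
    have h4 : HasDerivAt (fun t => -kd2 * q t - kd3 * u * t + c)
        (-kd2 * deriv q v - kd3 * u) v := by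
      have hr := (((hdq v).hasDerivAt.const_mul (-kd2)).sub
        ((hasDerivAt_id v).const_mul (kd3 * u))).add_const c
      exact hr.congr_deriv (by push_cast; ring)
    have hC : HasDerivAt (fun t => Z (a, b, u, t))
        ((0:ℝ), (1:ℝ), -kd1 * u * deriv s v - 2 * kL * v,
          -kd2 * deriv q v - kd3 * u) v := by
      have heq : (fun t => Z (a, b, u, t)) =
          fun t => ((u : ℝ), t, g - kd1 * s t * u - kL * t ^ 2,
            -kd2 * q t - kd3 * u * t + c) := funext fun t => hZ a b u t
      rw [heq]
      exact (hasDerivAt_const v u).prodMk ((hasDerivAt_id v).prodMk (h3.prodMk h4))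
    unfold lieBracketVF
    rw [hYe]
    simp only [fderiv_fun_const, Pi.zero_apply, ContinuousLinearMap.zero_apply, sub_zero]
    rw [fderiv_apply_e4 hdZ.differentiableAt]
    exact hC.deriv
  -- second bracket
  intro zz φ w p
  rw [hW1]
  set W1 : ℝ × ℝ × ℝ × ℝ → ℝ × ℝ × ℝ × ℝ := fun x =>
      ((0:ℝ), (1:ℝ), -kd1 * x.2.2.1 * deriv s x.2.2.2 - 2 * kL * x.2.2.2,
        -kd2 * deriv q x.2.2.2 - kd3 * x.2.2.1) with hW1def
  have hdW : Differentiable ℝ W1 := by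
    rw [hW1def]; fun_prop
  have h3' : HasDerivAt (fun t => -kd1 * w * deriv s t - 2 * kL * t)
      (-kd1 * w * deriv (deriv s) p - 2 * kL) p := by
    have hr := ((hds' p).hasDerivAt.const_mul (-kd1 * w)).sub
      ((hasDerivAt_id p).const_mul (2 * kL))
    exact hr.congr_deriv (by push_cast; ring)
  have h4' : HasDerivAt (fun t => -kd2 * deriv q t - kd3 * w)
      (-kd2 * deriv (deriv q) p) p := by
    have hr := ((hdq' p).hasDerivAt.const_mul (-kd2)).sub_const (kd3 * w)
    exact hr.congr_deriv (by push_cast; ring)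
  have hC' : HasDerivAt (fun t => W1 (zz, φ, w, t))
      ((0:ℝ), (0:ℝ), -kd1 * w * deriv (deriv s) p - 2 * kL,
        -kd2 * deriv (deriv q) p) p :=
    (hasDerivAt_const p (0:ℝ)).prodMk ((hasDerivAt_const p (1:ℝ)).prodMk (h3'.prodMk h4'))
  unfold lieBracketVF
  rw [hYe]
  simp only [fderiv_fun_const, Pi.zero_apply, ContinuousLinearMap.zero_apply, sub_zero]
  rw [fderiv_apply_e4 hdW.differentiableAt]
  exact hC'.deriv
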